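/- Let F, G : Fields_k → Sets be covariant functors and φ : F → G a natural transformation. Suppose d ≥ 0 is such that for every intermediate field k ⊆ K ⊆ L and every a ∈ F(L) whose image φ_L(a) descends to K, the element a descends to an intermediate field K ⊆ K' ⊆ L with trdeg_K K' ≤ d. Then ed_k F ≤ ed_k G + d. -/

import Mathlib

/-!
STATEMENT 2: (functorial fiber dimension theorem) Let `φ : F → G` be a natural
transformation of functors `Fields_k → Sets` and `d ≥ 0` such that whenever
`φ_L(a)` descends to an intermediate field `K` of `L/k`, the element `a` descends to an
intermediate field `K ⊆ K' ⊆ L` with `trdeg_K K' ≤ d`.  Then `ed_k F ≤ ed_k G + d`.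

`ed_k F ≤ e` is formalized as: every element of `F` descends to an intermediate field of
transcendence degree `≤ e`; the conclusion `ed_k F ≤ ed_k G + d` is formalized as: every
such upper bound `e` for `ed_k G` yields the upper bound `e + d` for `ed_k F`.
-/

universe u

/-- Transcendence degree of `K` over `k`. -/
noncomputable def trdeg (k K : Type u) [CommRing k] [CommRing K] [Algebra k K] :
    Cardinal.{u} :=
  ⨆ s : { s : Set K // AlgebraicIndependent k ((↑) : s → K) }, Cardinal.mk s.1

/-- A covariant functor from the category of field extensions of `k` to sets. -/
structure FieldFunctor (k : Type u) [Field k] where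
  obj : ∀ (L : Type u) [Field L] [Algebra k L], Type u
  map : ∀ {L M : Type u} [Field L] [Algebra k L] [Field M] [Algebra k M],
    (L →ₐ[k] M) → obj L → obj M
  map_id : ∀ (L : Type u) [Field L] [Algebra k L] (a : obj L), map (AlgHom.id k L) a = a
  map_comp : ∀ {L M N : Type u} [Field L] [Algebra k L] [Field M] [Algebra k M]
    [Field N] [Algebra k N] (f : L →ₐ[k] M) (g : M →ₐ[k] N) (a : obj L),
    map (g.comp f) a = map g (map f a)

/-- A natural transformation `φ : F → G` of functors `Fields_k → Sets`. -/
structure FieldFunctor.Hom {k : Type u} [Field k] (F G : FieldFunctor k) where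
  app : ∀ (L : Type u) [Field L] [Algebra k L], F.obj L → G.obj L
  naturality : ∀ {L M : Type u} [Field L] [Algebra k L] [Field M] [Algebra k M]
    (f : L →ₐ[k] M) (a : F.obj L), app M (F.map f a) = G.map f (app L a)

/-- `ed_k F ≤ d`. -/
def FieldFunctor.EssDimLE {k : Type u} [Field k] (F : FieldFunctor k) (d : Cardinal.{u}) :
    Prop :=
  ∀ (L : Type u) [Field L] [Algebra k L] (a : F.obj L),
    ∃ (E : IntermediateField k L) (b : F.obj E),
      F.map E.val b = a ∧ trdeg k E ≤ d


/-! ### Auxiliary machinery: Steinitz exchange and additivity of transcendence degree -/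

section FiberDimAux
open IntermediateField Cardinal

variable {F L : Type u} [Field F] [Field L] [Algebra F L]

theorem my_isFractionRing (S : Set L) :
    letI : Algebra (Algebra.adjoin F S) (IntermediateField.adjoin F S) :=
      (Subalgebra.inclusion (IntermediateField.algebra_adjoin_le_adjoin F S)).toAlgebra
    IsFractionRing (Algebra.adjoin F S) (IntermediateField.adjoin F S) := by
  letI : Algebra (Algebra.adjoin F S) (IntermediateField.adjoin F S) :=
    (Subalgebra.inclusion (IntermediateField.algebra_adjoin_le_adjoin F S)).toAlgebra
  have hinj : Function.Injective
      (algebraMap (Algebra.adjoin F S) (IntermediateField.adjoin F S)) := by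
    intro a b h
    have h2 : (((algebraMap (Algebra.adjoin F S) (IntermediateField.adjoin F S)) a : IntermediateField.adjoin F S) : L) = (((algebraMap (Algebra.adjoin F S) (IntermediateField.adjoin F S)) b : IntermediateField.adjoin F S) : L) := congrArg Subtype.val h
    exact Subtype.ext h2
  refine (isLocalization_iff _ _).2 ⟨?_, ?_, ?_⟩
  · rintro ⟨y, hy⟩
    rw [isUnit_iff_ne_zero]
    intro h0
    exact nonZeroDivisors.ne_zero hy (hinj (by rw [h0, map_zero]))
  · rintro ⟨z, hz⟩
    rcases (IntermediateField.mem_adjoin_iff F z).1 hz with ⟨r, s, hrs⟩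
    by_cases hs : MvPolynomial.aeval (Subtype.val : S → L) s = 0
    · refine ⟨⟨0, 1⟩, ?_⟩
      have : z = 0 := by rw [hrs, hs, div_zero]
      apply Subtype.ext
      show z * _ = _
      simp [this]
    · have hrmem : MvPolynomial.aeval (Subtype.val : S → L) r ∈ Algebra.adjoin F S := by
        have h2 := Algebra.adjoin_range_eq_range_aeval F (Subtype.val : S → L)
        rw [Subtype.range_coe] at h2
        rw [h2]; exact ⟨r, rfl⟩
      have hsmem : MvPolynomial.aeval (Subtype.val : S → L) s ∈ Algebra.adjoin F S := by
        have h2 := Algebra.adjoin_range_eq_range_aeval F (Subtype.val : S → L)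
        rw [Subtype.range_coe] at h2
        rw [h2]; exact ⟨s, rfl⟩
      refine ⟨⟨⟨_, hrmem⟩, ⟨⟨_, hsmem⟩, ?_⟩⟩, ?_⟩
      · exact mem_nonZeroDivisors_of_ne_zero (fun h => hs (congrArg Subtype.val h))
      · have key : z * (MvPolynomial.aeval (Subtype.val : S → L) s)
            = MvPolynomial.aeval (Subtype.val : S → L) r := by
          rw [hrs]; field_simp
        exact Subtype.ext key
  · intro a b h
    exact ⟨1, by simpa using hinj h⟩

theorem isAlgebraic_IF_adjoin_iff {S : Set L} {x : L} :
    IsAlgebraic (IntermediateField.adjoin F S) x ↔ IsAlgebraic (Algebra.adjoin F S) x := by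
  letI : Algebra (Algebra.adjoin F S) (IntermediateField.adjoin F S) :=
    (Subalgebra.inclusion (IntermediateField.algebra_adjoin_le_adjoin F S)).toAlgebra
  haveI : IsScalarTower (Algebra.adjoin F S) (IntermediateField.adjoin F S) L :=
    .of_algebraMap_eq fun _ => rfl
  haveI := my_isFractionRing (F := F) S
  exact (IsFractionRing.isAlgebraic_iff (Algebra.adjoin F S) (IntermediateField.adjoin F S) L).symm

theorem acl_mono {t t' : Set L} (h : t ⊆ t') {x : L}
    (hx : IsAlgebraic (adjoin F t) x) : IsAlgebraic (adjoin F t') x :=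
  isAlgebraic_IF_adjoin_iff.2
    ((isAlgebraic_IF_adjoin_iff.1 hx).tower_top_of_subalgebra_le (Algebra.adjoin_mono h))

theorem acl_mem {t : Set L} {x : L} (h : x ∈ t) : IsAlgebraic (adjoin F t) x := by
  have : x = algebraMap (adjoin F t) L ⟨x, subset_adjoin F t h⟩ := rfl
  rw [this]
  exact isAlgebraic_algebraMap _

theorem acl_trans {t t₂ : Set L} (ht : ∀ y ∈ t, IsAlgebraic (adjoin F t₂) y) {x : L}
    (hx : IsAlgebraic (adjoin F t) x) : IsAlgebraic (adjoin F t₂) x := by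
  have hx' : IsAlgebraic (adjoin F (t₂ ∪ t)) x := acl_mono Set.subset_union_right hx
  rw [← adjoin_adjoin_left F t₂ t] at hx'
  have hx'' : IsAlgebraic (adjoin (↥(adjoin F t₂)) t) x := hx'
  haveI : Algebra.IsAlgebraic (↥(adjoin F t₂)) (adjoin (↥(adjoin F t₂)) t) :=
    isAlgebraic_adjoin (fun y hy => (isAlgebraic_iff_isIntegral.1 (ht y hy)))
  haveI : Algebra.IsIntegral (↥(adjoin F t₂)) (adjoin (↥(adjoin F t₂)) t) :=
    Algebra.isAlgebraic_iff_isIntegral.1 this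
  exact (isIntegral_trans x (isAlgebraic_iff_isIntegral.1 hx'')).isAlgebraic

theorem indep_not_acl {s : Set L} (hs : AlgebraicIndependent F ((↑) : s → L)) {a : L}
    (ha : a ∈ s) {v : Set L} (hv : v ⊆ s \ {a}) : ¬ IsAlgebraic (adjoin F v) a := by
  classical
  intro hcontra
  have hu : AlgebraicIndependent F ((↑) : (s \ {a} : Set L) → L) :=
    hs.mono Set.diff_subset
  have hins : insert a (s \ {a}) = s := by
    rw [Set.insert_diff_singleton, Set.insert_eq_self.2 ha]
  have h1 : AlgebraicIndependent F ((↑) : ↥(insert a (s \ {a})) → L) := by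
    rw [hins]; exact hs
  have hanotin : a ∉ (s \ {a} : Set L) := fun h => h.2 rfl
  have h2 := h1.comp (Set.subtypeInsertEquivOption hanotin).symm
    (Equiv.injective _)
  have h3 : ((↑) : ↥(insert a (s \ {a})) → L) ∘ (Set.subtypeInsertEquivOption hanotin).symm
      = fun o : Option ↥(s \ {a} : Set L) => o.elim a ((↑) : (s \ {a} : Set L) → L) := by
    funext o
    cases o with
    | none => simp [Set.subtypeInsertEquivOption]
    | some i => simp [Set.subtypeInsertEquivOption]
  rw [h3] at h2
  have h4 := (hu.option_iff_transcendental a).1 h2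
  rw [Subtype.range_coe] at h4
  exact h4 (isAlgebraic_IF_adjoin_iff.1 (acl_mono hv hcontra))

theorem acl_exchange {u : Set L} {a b : L} (ha : ¬ IsAlgebraic (adjoin F u) a)
    (hab : IsAlgebraic (adjoin F (insert b u)) a) :
    IsAlgebraic (adjoin F (insert a u)) b := by
  by_contra hb
  set M := ↥(adjoin F u) with hM
  -- transport hb to M-level
  have hb' : ¬ IsAlgebraic (adjoin M {a}) b := by
    intro h
    apply hb
    have h2 : IsAlgebraic (restrictScalars F (adjoin M {a})) b := h
    rw [adjoin_adjoin_left F u {a}] at h2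
    rw [show u ∪ {a} = insert a u by rw [Set.union_comm]; rfl] at h2
    exact h2
  have hab' : IsAlgebraic (adjoin M {b}) a := by
    have h2 : IsAlgebraic (adjoin F (u ∪ {b})) a := by
      rw [show u ∪ {b} = insert b u by rw [Set.union_comm]; rfl]
      exact hab
    rw [← adjoin_adjoin_left F u {b}] at h2
    exact h2
  have haM : Transcendental M a := ha
  -- singleton family
  have single_a : AlgebraicIndependent M (fun _ : Unit => a) :=
    (algebraicIndependent_unique_type_iff).2 haM
  have hbadj : Transcendental (Algebra.adjoin M (Set.range fun _ : Unit => a)) b := by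
    rw [Set.range_const]
    exact fun h => hb' (isAlgebraic_IF_adjoin_iff.2 h)
  have hopt : AlgebraicIndependent M
      (fun o : Option Unit => o.elim b (fun _ : Unit => a)) :=
    (single_a.option_iff_transcendental b).2 hbadj
  -- swap
  have hswap : AlgebraicIndependent M
      (fun o : Option Unit => o.elim a (fun _ : Unit => b)) := by
    have := hopt.comp (Equiv.swap (none : Option Unit) (some ()))
      (Equiv.injective _)
    convert this using 1
    funext o
    cases o with
    | none => simp
    | some i => simp [Equiv.swap_apply_of_ne_of_ne]
  have single_b : AlgebraicIndependent M (fun _ : Unit => b) := by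
    have := hswap.comp (fun u : Unit => some u) (Option.some_injective _)
    exact this
  have := (single_b.option_iff_transcendental a).1 hswap
  rw [Set.range_const] at this
  exact this (isAlgebraic_IF_adjoin_iff.1 hab')


theorem finite_main (s t : Finset L)
    (hs : AlgebraicIndependent F ((↑) : (↑s : Set L) → L))
    (ht : ∀ a ∈ s, IsAlgebraic (adjoin F (↑t : Set L)) a) : s.card ≤ t.card := by
  classical
  suffices H : ∀ n (s t : Finset L), (s \ t).card = n →
      AlgebraicIndependent F ((↑) : (↑s : Set L) → L) →
      (∀ a ∈ s, IsAlgebraic (adjoin F (↑t : Set L)) a) → s.card ≤ t.card from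
    H _ s t rfl hs ht
  intro n
  induction n using Nat.strong_induction_on with
  | _ n IH =>
  intro s t hn hs ht
  by_cases hsub : s ⊆ t
  · exact Finset.card_le_card hsub
  · obtain ⟨a, has, hat⟩ : ∃ a ∈ s, a ∉ t := by
      rcases Finset.not_subset.1 hsub with ⟨a, h1, h2⟩; exact ⟨a, h1, h2⟩
    set P := t.powerset.filter (fun u : Finset L => IsAlgebraic (adjoin F (↑u : Set L)) a) with hP
    have htP : t ∈ P := by
      simp only [hP, Finset.mem_filter, Finset.mem_powerset]
      exact ⟨le_refl t, ht a has⟩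
    obtain ⟨t₀, ht₀P, ht₀min⟩ := Finset.exists_min_image P Finset.card ⟨t, htP⟩
    have ht₀sub : t₀ ⊆ t := Finset.mem_powerset.1 (Finset.mem_filter.1 ht₀P).1
    have ht₀alg : IsAlgebraic (adjoin F (↑t₀ : Set L)) a := (Finset.mem_filter.1 ht₀P).2
    obtain ⟨b, hbt₀, hbs⟩ : ∃ b ∈ t₀, b ∉ s := by
      by_contra hcon
      push_neg at hcon
      have hsubs : (↑t₀ : Set L) ⊆ (↑s : Set L) \ {a} := by
        intro c hc
        refine ⟨hcon c hc, ?_⟩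
        intro hca
        rw [Set.mem_singleton_iff] at hca
        subst hca
        exact hat (ht₀sub (by exact_mod_cast hc))
      exact indep_not_acl hs has hsubs ht₀alg
    have hmin : ¬ IsAlgebraic (adjoin F (↑(t₀.erase b) : Set L)) a := by
      intro halg
      have hmem : t₀.erase b ∈ P := by
        simp only [hP, Finset.mem_filter, Finset.mem_powerset]
        exact ⟨(Finset.erase_subset b t₀).trans ht₀sub, halg⟩
      have h1 := ht₀min _ hmem
      have h2 : (t₀.erase b).card < t₀.card := Finset.card_erase_lt_of_mem hbt₀
      omega
    have hexch : IsAlgebraic (adjoin F (insert a (↑(t₀.erase b) : Set L))) b := by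
      apply acl_exchange hmin
      have h1 : insert b (↑(t₀.erase b) : Set L) = (↑t₀ : Set L) := by
        rw [← Finset.coe_insert, Finset.insert_erase hbt₀]
      rw [h1]
      exact ht₀alg
    set t' := insert a (t.erase b) with ht'
    have halg' : ∀ c ∈ s, IsAlgebraic (adjoin F (↑t' : Set L)) c := by
      intro c hcs
      apply acl_trans (t := (↑t : Set L)) ?_ (ht c hcs)
      intro y hyt
      by_cases hyb : y = b
      · rw [hyb]
        apply acl_mono ?_ hexch
        intro z hz
        rcases Set.mem_insert_iff.1 hz with rfl | hz2
        · simp [ht']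
        · have hz3 : z ∈ t.erase b := Finset.erase_subset_erase b ht₀sub (by exact_mod_cast hz2)
          simp only [ht', Finset.coe_insert, Set.mem_insert_iff]
          right
          exact_mod_cast hz3
      · apply acl_mem
        simp only [ht', Finset.coe_insert, Set.mem_insert_iff]
        right
        have : y ∈ t := by exact_mod_cast hyt
        exact_mod_cast Finset.mem_erase.2 ⟨hyb, this⟩
    have hbt : b ∈ t := ht₀sub hbt₀
    have hat' : a ∉ t.erase b := fun h => hat (Finset.erase_subset _ _ h)
    have hcard : t'.card = t.card := by
      rw [ht', Finset.card_insert_of_notMem hat', Finset.card_erase_of_mem hbt]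
      have : 0 < t.card := Finset.card_pos.2 ⟨b, hbt⟩
      omega
    have hsdiff : s \ t' = (s \ t).erase a := by
      ext c
      by_cases hcb : c = b
      · subst hcb
        simp [hbs]
      · simp only [Finset.mem_sdiff, ht', Finset.mem_insert, Finset.mem_erase]
        constructor
        · rintro ⟨hcs, hc⟩
          push_neg at hc
          exact ⟨hc.1, hcs, fun hct => hc.2 hcb hct⟩
        · rintro ⟨hca, hcs, hct⟩
          push_neg
          exact ⟨hcs, hca, fun _ => hct⟩
    have h0 : a ∈ s \ t := Finset.mem_sdiff.2 ⟨has, hat⟩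
    have hlt : (s \ t').card < n := by
      rw [hsdiff, Finset.card_erase_of_mem h0]
      have hpos : 0 < (s \ t).card := Finset.card_pos.2 ⟨a, h0⟩
      omega
    calc s.card ≤ t'.card := IH _ hlt s t' rfl hs halg'
    _ = t.card := hcard

theorem acl_finset {t : Set L} {x : L} (h : IsAlgebraic (adjoin F t) x) :
    ∃ u : Finset L, (↑u : Set L) ⊆ t ∧ IsAlgebraic (adjoin F (↑u : Set L)) x := by
  classical
  obtain ⟨p, hp0, hpx⟩ := h
  choose T hT1 hT2 using
    (fun i => IntermediateField.exists_finset_of_mem_adjoin (F := F) (p.coeff i).2)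
  set u : Finset L := p.support.biUnion T with hu
  have husub : (↑u : Set L) ⊆ t := by
    intro z hz
    rw [hu] at hz
    simp only [Finset.coe_biUnion, Set.mem_iUnion, Finset.mem_coe] at hz
    obtain ⟨i, _, hzi⟩ := hz
    exact hT1 i hzi
  have hcoeff : ∀ i ∈ p.support, ((p.coeff i : L) ∈ adjoin F (↑u : Set L)) := by
    intro i hi
    have h1 : adjoin F (↑(T i) : Set L) ≤ adjoin F (↑u : Set L) := by
      apply IntermediateField.adjoin.mono
      intro z hz
      rw [hu]
      simp only [Finset.coe_biUnion, Set.mem_iUnion, Finset.mem_coe]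
      exact ⟨i, hi, by exact_mod_cast hz⟩
    exact h1 (hT2 i)
  refine ⟨u, husub, ?_⟩
  set c : ℕ → ↥(adjoin F (↑u : Set L)) := fun i =>
    if h : (p.coeff i : L) ∈ adjoin F (↑u : Set L) then ⟨(p.coeff i : L), h⟩ else 0 with hc
  set q : Polynomial ↥(adjoin F (↑u : Set L)) :=
    ∑ i ∈ p.support, Polynomial.C (c i) * Polynomial.X ^ i with hq
  have hcval : ∀ i ∈ p.support, ((c i : L)) = (p.coeff i : L) := by
    intro i hi
    rw [hc]
    simp only [dif_pos (hcoeff i hi)]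
  have hqcoeff : ∀ n, q.coeff n = if n ∈ p.support then c n else 0 := by
    intro n
    rw [hq, Polynomial.finset_sum_coeff]
    by_cases hn : n ∈ p.support
    · rw [if_pos hn, Finset.sum_eq_single n]
      · simp
      · intro i _ hne
        simp [Polynomial.coeff_C_mul, Polynomial.coeff_X_pow, Ne.symm hne]
      · intro habs
        exact absurd hn habs
    · rw [if_neg hn]
      apply Finset.sum_eq_zero
      intro i hi
      have : n ≠ i := fun hni => hn (hni ▸ hi)
      simp [Polynomial.coeff_C_mul, Polynomial.coeff_X_pow, this]
  refine ⟨q, ?_, ?_⟩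
  · intro hq0
    have hnd : p.natDegree ∈ p.support := by
      rw [Polynomial.mem_support_iff]
      exact Polynomial.leadingCoeff_ne_zero.2 hp0
    have h1 : q.coeff p.natDegree = c p.natDegree := by rw [hqcoeff, if_pos hnd]
    have h2 : q.coeff p.natDegree = 0 := by rw [hq0]; simp
    have h3 : ((c p.natDegree : L)) = (p.coeff p.natDegree : L) := hcval _ hnd
    rw [h1] at h2
    rw [h2] at h3
    have : (p.coeff p.natDegree : L) = 0 := by simpa using h3.symm
    have : p.coeff p.natDegree = 0 := by exact_mod_cast this
    exact (Polynomial.mem_support_iff.1 hnd) this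
  · have heval : Polynomial.aeval x q = ∑ i ∈ p.support, ((c i : L)) * x ^ i := by
      rw [hq, map_sum]
      congr 1
      funext i
      rw [map_mul, Polynomial.aeval_C, map_pow, Polynomial.aeval_X]
      rfl
    have heval2 : Polynomial.aeval x p = ∑ i ∈ p.support, ((p.coeff i : L)) * x ^ i := by
      rw [Polynomial.aeval_def, Polynomial.eval₂_eq_sum, Polynomial.sum_def]
      rfl
    rw [heval, Finset.sum_congr rfl (fun i hi => by rw [hcval i hi]), ← heval2, hpx]

theorem card_main {s t : Set L} (hs : AlgebraicIndependent F ((↑) : s → L))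
    (ht : ∀ a ∈ s, IsAlgebraic (adjoin F t) a) : #s ≤ #t := by
  classical
  -- s has no finite subset larger than any finite "spanning" subfinset of t
  have key : ∀ (s' : Finset L), (↑s' : Set L) ⊆ s → ∀ (t' : Finset L), (↑t' : Set L) ⊆ t →
      (∀ a ∈ s', IsAlgebraic (adjoin F (↑t' : Set L)) a) → s'.card ≤ t'.card := by
    intro s' hs' t' _ halg
    refine finite_main s' t' ?_ halg
    exact hs.mono hs'
  by_cases hfin : t.Finite
  · -- then s is finite of card ≤ t.card
    have hsfin : s.Finite := by
      rw [← Set.not_infinite]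
      intro hinf
      obtain ⟨s', hs'sub, hs'card⟩ := hinf.exists_subset_card_eq (hfin.toFinset.card + 1)
      have := key s' hs'sub hfin.toFinset (by simp)
        (fun a ha => by
          have := ht a (hs'sub ha)
          rwa [Set.Finite.coe_toFinset])
      omega
    obtain ⟨s', hs'eq⟩ : ∃ s' : Finset L, (↑s' : Set L) = s := ⟨hsfin.toFinset, hsfin.coe_toFinset⟩
    obtain ⟨t', ht'eq⟩ : ∃ t' : Finset L, (↑t' : Set L) = t := ⟨hfin.toFinset, hfin.coe_toFinset⟩
    have hcard := key s' (hs'eq ▸ le_refl _) t' (ht'eq ▸ le_refl _)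
      (fun a ha => by rw [ht'eq]; exact ht a (by rw [← hs'eq]; exact_mod_cast ha))
    rw [← hs'eq, ← ht'eq]
    simp only [Finset.coe_sort_coe, mk_coe_finset]
    exact_mod_cast hcard
  · -- t infinite
    haveI : Infinite ↥t := Set.Infinite.to_subtype hfin
    choose U hU1 hU2 using (fun a : s => acl_finset (ht a a.2))
    -- fibers of U are finite
    have hfib : ∀ w : Finset L, (U ⁻¹' {w}).Finite := by
      intro w
      rw [← Set.not_infinite]
      intro hinf
      have himg : (Subtype.val '' (U ⁻¹' {w}) : Set L).Infinite :=
        hinf.image (Set.injOn_of_injective Subtype.val_injective)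
      obtain ⟨s', hs'sub, hs'card⟩ := himg.exists_subset_card_eq (w.card + 1)
      have hs'sub2 : (↑s' : Set L) ⊆ s := hs'sub.trans (by
        rintro z ⟨a, _, rfl⟩; exact a.2)
      have := key s' hs'sub2 w (by
          rcases himg.nonempty with ⟨z, a, ha, rfl⟩
          have := hU1 a
          rw [ha] at this
          exact this)
        (fun z hz => by
          rcases hs'sub hz with ⟨a, ha, rfl⟩
          have h2 := hU2 a
          rw [ha] at h2
          exact h2)
      omega
    -- injection into (subsets of t) × ℕ
    have h1 : #s ≤ #{w : Finset L // (↑w : Set L) ⊆ t} * ℵ₀ := by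
      apply mk_le_mk_mul_of_mk_preimage_le (fun a : s => (⟨U a, hU1 a⟩ : {w : Finset L // (↑w : Set L) ⊆ t}))
      intro b
      apply le_of_lt
      apply lt_of_lt_of_le _ (le_refl ℵ₀)
      rw [lt_aleph0_iff_set_finite]
      have : ((fun a : s => (⟨U a, hU1 a⟩ : {w : Finset L // (↑w : Set L) ⊆ t})) ⁻¹' {b})
          ⊆ (U ⁻¹' {b.1}) := by
        intro a ha
        simp only [Set.mem_preimage, Set.mem_singleton_iff] at ha ⊢
        rw [← ha]
      exact (hfib b.1).subset this
    have h2 : #{w : Finset L // (↑w : Set L) ⊆ t} ≤ #(Finset ↥t) := by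
      refine mk_le_of_injective
        (f := fun w : {w : Finset L // (↑w : Set L) ⊆ t} => Finset.subtype (· ∈ t) w.1) ?_
      intro w₁ w₂ hw
      apply Subtype.ext
      have e1 : (Finset.subtype (· ∈ t) w₁.1).map (Function.Embedding.subtype _) = w₁.1 := by
        rw [Finset.subtype_map]
        apply Finset.filter_true_of_mem
        intro z hz; exact w₁.2 hz
      have e2 : (Finset.subtype (· ∈ t) w₂.1).map (Function.Embedding.subtype _) = w₂.1 := by
        rw [Finset.subtype_map]
        apply Finset.filter_true_of_mem
        intro z hz; exact w₂.2 hz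
      rw [← e1, ← e2]
      exact congrArg _ hw
    have h3 : #(Finset ↥t) = #↥t := mk_finset_of_infinite _
    calc #s ≤ #{w : Finset L // (↑w : Set L) ⊆ t} * ℵ₀ := h1
      _ ≤ #(Finset ↥t) * ℵ₀ := by exact mul_le_mul_left h2 _
      _ = #↥t * ℵ₀ := by rw [h3]
      _ = #↥t := by
          rw [mul_eq_max (aleph0_le_mk ↥t) (le_refl ℵ₀)]
          exact max_eq_left (aleph0_le_mk ↥t)

end FiberDimAux

section FiberDimAux2
open IntermediateField Cardinal

/-- transfer of algebraicity along an embedding of fields -/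
theorem isAlgebraic_adjoin_map {k M N : Type u} [Field k] [Field M] [Field N]
    [Algebra k M] [Algebra k N] (f : M →ₐ[k] N) {S : Set M} {x : M}
    (h : IsAlgebraic (Algebra.adjoin k S) x) :
    IsAlgebraic (Algebra.adjoin k (f '' S)) (f x) := by
  have hf : Function.Injective f := RingHom.injective (f : M →+* N)
  let e : ↥(Algebra.adjoin k S) ≃+* ↥(Algebra.adjoin k (f '' S)) :=
    ((Subalgebra.equivMapOfInjective (Algebra.adjoin k S) f hf).trans
      (Subalgebra.equivOfEq _ _ (AlgHom.map_adjoin f S))).toRingEquiv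
  refine (isAlgebraic_ringHom_iff_of_comp_eq e (f : M →+* N) hf ?_).2 h
  ext r
  rfl

/-- transfer from a subalgebra (over a possibly bigger base) into an intermediate field -/
theorem isAlgebraic_of_subalg_le {k L M0 : Type u} [Field k] [Field L] [Algebra k L]
    [Field M0] [Algebra M0 L] {S : Set L}
    (M' : IntermediateField k L)
    (hsub : ∀ z : L, z ∈ Algebra.adjoin M0 S → z ∈ M') {x : L}
    (h : IsAlgebraic (Algebra.adjoin M0 S) x) : IsAlgebraic M' x := by
  let φ : ↥(Algebra.adjoin M0 S) →+* ↥M' :=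
    { toFun := fun a => ⟨a.1, hsub a.1 a.2⟩
      map_one' := rfl
      map_mul' := fun _ _ => rfl
      map_zero' := rfl
      map_add' := fun _ _ => rfl }
  letI : Algebra ↥(Algebra.adjoin M0 S) ↥M' := φ.toAlgebra
  haveI : IsScalarTower ↥(Algebra.adjoin M0 S) ↥M' L := .of_algebraMap_eq fun _ => rfl
  refine h.extendScalars ?_
  intro a b hab
  have h2 : ((φ a : ↥M') : L) = ((φ b : ↥M') : L) := congrArg Subtype.val hab
  exact Subtype.ext h2

theorem trdeg_tower {k L : Type u} [Field k] [Field L] [Algebra k L]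
    (E : IntermediateField k L) (K' : IntermediateField ↥E L) {e d : Cardinal.{u}}
    (he : trdeg k ↥E ≤ e) (hd : trdeg (↥E) ↥K' ≤ d) :
    trdeg k ↥(K'.restrictScalars k) ≤ e + d := by
  classical
  set Ek := K'.restrictScalars k with hEk
  apply ciSup_le'
  rintro ⟨s, hs⟩
  show #s ≤ e + d
  -- push s into L
  have h1 : AlgebraicIndependent k (fun a : s => Ek.val (a : ↥Ek)) := by
    apply hs.ringHom_of_comp_eq (RingHom.id k) (Ek.val : ↥Ek →+* L)
      Function.surjective_id (RingHom.injective _)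
    ext c
    exact (Ek.val.commutes c).symm
  set sL : Set L := Ek.val '' s with hsL_def
  have hsL : AlgebraicIndependent k ((↑) : sL → L) := by
    apply h1.to_subtype_range'
    rw [show (fun a : s => Ek.val (a : ↥Ek)) = (Ek.val ∘ ((↑) : s → ↥Ek)) from rfl,
      Set.range_comp, Subtype.range_coe]
  -- transcendence basis of E
  obtain ⟨B, hB⟩ := exists_isTranscendenceBasis k
    ↥E
  have hBe : #B ≤ e := le_trans
    (le_ciSup (Cardinal.bddAbove_range _)
      (⟨B, hB.1⟩ : {u : Set ↥E // AlgebraicIndependent k ((↑) : u → ↥E)})) he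
  set BL : Set L := E.val '' B with hBL_def
  -- maximal independent subset of s over E
  obtain ⟨s₁, -, hs₁max⟩ := exists_maximal_algebraicIndependent (∅ : Set ↥K') s
    (Set.empty_subset s) ((algebraicIndependent_empty_iff (↥E) ↥K').2
      (algebraMap ↥E ↥K').injective)
  have hs₁indep : AlgebraicIndependent (↥E) ((↑) : s₁ → ↥K') := hs₁max.1.1
  have hs₁sub : s₁ ⊆ s := hs₁max.1.2
  have hs₁d : #s₁ ≤ d := le_trans
    (le_ciSup (Cardinal.bddAbove_range _)
      (⟨s₁, hs₁indep⟩ : {u : Set ↥K' // AlgebraicIndependent (↥E) ((↑) : u → ↥K')})) hd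
  set s₁L : Set L := Ek.val '' s₁ with hs₁L_def
  set W : Set L := BL ∪ s₁L with hW_def
  -- each element of E is algebraic over adjoin k BL (inside L)
  have hEL : ∀ y : ↥E, IsAlgebraic (adjoin k BL) (E.val y) := by
    intro y
    have h2 := hB.isAlgebraic_field.isAlgebraic y
    rw [Subtype.range_coe] at h2
    have h3 : IsAlgebraic (Algebra.adjoin k B) y := isAlgebraic_IF_adjoin_iff.1 h2
    have h4 := isAlgebraic_adjoin_map E.val h3
    exact isAlgebraic_IF_adjoin_iff.2 h4
  -- each element of s is algebraic over adjoin k W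
  have hkey : ∀ x ∈ sL, IsAlgebraic (adjoin k W) x := by
    rintro x ⟨a, has, rfl⟩
    let a' : ↥K' := a
    by_cases hmem : a' ∈ s₁
    · exact acl_mem (Or.inr ⟨a, hmem, rfl⟩)
    · -- a is algebraic over E(s₁)
      have halg : IsAlgebraic (Algebra.adjoin (↥E) s₁) a' := by
        by_contra htr
        have hopt := (hs₁indep.option_iff_transcendental a').2 (by rwa [Subtype.range_coe])
        have hins : AlgebraicIndependent (↥E) ((↑) : ↑(insert a' s₁) → ↥K') := by
          convert hopt.comp _ (Set.subtypeInsertEquivOption hmem).injective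
          ext z
          by_cases h : ↑z = a' <;> simp [h, Set.subtypeInsertEquivOption]
        exact hmem (hs₁max.2 ⟨hins, Set.insert_subset has hs₁sub⟩
          (Set.subset_insert _ s₁) (Set.mem_insert _ s₁))
      have halg2 := isAlgebraic_adjoin_map K'.val halg
      have halg3 : IsAlgebraic (adjoin k ((Set.range (algebraMap ↥E L)) ∪ s₁L))
          (Ek.val a) := by
        apply isAlgebraic_of_subalg_le (M0 := ↥E) _ ?_ halg2
        intro z hz
        induction hz using Algebra.adjoin_induction with
        | mem w hw =>
          apply subset_adjoin
          right
          exact hw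
        | algebraMap r =>
          apply subset_adjoin
          left
          exact ⟨r, rfl⟩
        | add _ _ _ _ ih1 ih2 => exact add_mem ih1 ih2
        | mul _ _ _ _ ih1 ih2 => exact mul_mem ih1 ih2
      apply acl_trans ?_ halg3
      rintro y (⟨r, rfl⟩ | hy)
      · exact acl_mono Set.subset_union_left (hEL r)
      · exact acl_mem (Or.inr hy)
  -- counting
  have hcount : #sL ≤ #W := card_main hsL hkey
  have heq : #s = #sL := (Cardinal.mk_image_eq Subtype.val_injective).symm
  calc #s = #sL := heq
    _ ≤ #W := hcount
    _ ≤ #BL + #s₁L := Cardinal.mk_union_le _ _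
    _ ≤ #B + #s₁ := add_le_add (Cardinal.mk_image_le.trans_eq rfl) Cardinal.mk_image_le
    _ ≤ e + d := add_le_add hBe hs₁d

end FiberDimAux2

theorem stmt2 {k : Type u} [Field k] (F G : FieldFunctor k) (φ : F.Hom G)
    (d : Cardinal.{u})
    (hfib : ∀ (L : Type u) [Field L] [Algebra k L] (a : F.obj L)
      (K : IntermediateField k L),
      -- if `φ_L a` descends to `K` ...
      (∃ c : G.obj K, G.map K.val c = φ.app L a) →
      -- ... then `a` descends to some `K ⊆ K' ⊆ L` with `trdeg_K K' ≤ d`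
      (∃ (K' : IntermediateField K L) (b : F.obj K'),
        F.map ((IntermediateField.val K').restrictScalars k) b = a ∧ trdeg K K' ≤ d)) :
    ∀ e : Cardinal.{u}, G.EssDimLE e → F.EssDimLE (e + d) := by
  intro e hGe
  intro L _ _ a
  obtain ⟨E, c, hc, hE⟩ := hGe L (φ.app L a)
  obtain ⟨K', b, hb, hd'⟩ := hfib L a E ⟨c, hc⟩
  exact ⟨K'.restrictScalars k, b, hb, trdeg_tower E K' hE hd'⟩
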